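/- For all integers q ≥ 2, n ≥ 2 and all N ∈ ℕ, there exists a q-ary 2̄-separable code of length n with at least N − ⌊binom(N,2)·q^{−n} + 3·binom(N,4)·2^n·q^{−2n}⌋ codewords. -/

import Mathlib

set_option linter.unusedSectionVars false

def desc {F : Type*} {n : ℕ} (X : Set (Fin n → F)) : Set (Fin n → F) :=
  {y | ∀ k : Fin n, ∃ x ∈ X, y k = x k}

open Finset

namespace Sep2Aux

open scoped Classical

variable {F : Type*} [Fintype F] {n N : ℕ}

/-- exchange lemma -/
theorem pair_exchange {α : Type*} {x u v : α} (h : ({x, u} : Set α) = {x, v}) : u = v := by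
  have hu : u ∈ ({x, v} : Set α) := h ▸ (by simp)
  rcases hu with hu | hu
  · subst hu
    have hv : v ∈ ({u, u} : Set α) := h.symm ▸ (by simp)
    have : v = u := by simpa using hv
    exact this.symm
  · exact hu

theorem pair_exchange' {α : Type*} {x u v : α} (h : ({u, x} : Set α) = {v, x}) : u = v :=
  pair_exchange (x := x) (by rw [Set.pair_comm x u, Set.pair_comm x v]; exact h)

/-- The quadruple property -/
def PP (f : Fin N → Fin n → F) (w x y z : Fin N) : Prop :=
  ∀ c : Fin n, ({f w c, f x c} : Set F) = {f y c, f z c}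

theorem PP.swap1 {f : Fin N → Fin n → F} {w x y z : Fin N} (h : PP f w x y z) : PP f x w y z :=
  fun c => by rw [Set.pair_comm]; exact h c

theorem PP.swap2 {f : Fin N → Fin n → F} {w x y z : Fin N} (h : PP f w x y z) : PP f w x z y :=
  fun c => by rw [(h c), Set.pair_comm]

theorem PP.symm {f : Fin N → Fin n → F} {w x y z : Fin N} (h : PP f w x y z) : PP f y z w x :=
  fun c => (h c).symm

def pairsSet (N : ℕ) : Finset (Fin N × Fin N) := univ.filter (fun p => p.1 < p.2)

theorem card_pairsSet : (pairsSet N).card = N.choose 2 := by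
  have h1 : (pairsSet N).card = ∑ j : Fin N, ((pairsSet N).filter (fun p => p.2 = j)).card :=
    card_eq_sum_card_fiberwise (fun p _ => mem_univ _)
  have h2 : ∀ j : Fin N, ((pairsSet N).filter (fun p => p.2 = j)).card = (j : ℕ) := by
    intro j
    rw [← Fin.card_Iio (b := j)]
    apply Finset.card_bij (fun p _ => p.1)
    · rintro ⟨p1, p2⟩ hp
      simp only [pairsSet, mem_filter, mem_univ, true_and] at hp
      simp [Finset.mem_Iio, hp.2 ▸ hp.1]
    · rintro ⟨p1, p2⟩ hp ⟨q1, q2⟩ hq h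
      simp only [pairsSet, mem_filter, mem_univ, true_and] at hp hq
      simp only at h
      subst h; rw [hp.2, hq.2]
    · intro b hb
      simp only [Finset.mem_Iio] at hb
      exact ⟨(b, j), by simp [pairsSet, hb], rfl⟩
  rw [h1]
  simp only [h2]
  have h3 : ∑ j : Fin N, (j : ℕ) = ∑ j ∈ range N, j := Fin.sum_univ_eq_sum_range (fun i => i) N
  have h4 := Finset.sum_range_id_mul_two N
  have h5 : N.choose 2 = N * (N - 1) / 2 := Nat.choose_two_right N
  omega


/-- card of functions with one coincidence -/
theorem card_pair_bad {i j : Fin N} (hij : i ≠ j) :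
    ((univ : Finset (Fin N → Fin n → F)).filter (fun f => f i = f j)).card ≤
      (Fintype.card F) ^ (n * (N - 1)) := by
  have hcard : Fintype.card ({t : Fin N // t ≠ j} → (Fin n → F)) =
      (Fintype.card F) ^ (n * (N - 1)) := by
    rw [Fintype.card_fun, Fintype.card_fun, Fintype.card_fin]
    have : Fintype.card {t : Fin N // t ≠ j} = N - 1 := by
      rw [Fintype.card_subtype]
      have : (univ.filter (fun t : Fin N => t ≠ j)) = univ.erase j := by
        ext t; simp [Finset.mem_erase]
      rw [this, Finset.card_erase_of_mem (mem_univ _), Finset.card_univ, Fintype.card_fin]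
    rw [this, ← pow_mul]
  rw [← hcard, ← Finset.card_univ]
  apply Finset.card_le_card_of_injOn (fun f => fun t => f t.1)
  · intro f _; exact mem_univ _
  · intro f hf g hg h
    simp only [Finset.mem_coe, Finset.mem_filter] at hf hg
    funext t
    by_cases ht : t = j
    · subst ht
      rw [← hf.2, ← hg.2]
      exact congrFun h ⟨i, hij⟩
    · exact congrFun h ⟨t, ht⟩

/-- card of functions with quadruple property -/
theorem card_quad_bad {w x y z : Fin N} (hyz : y ≠ z) (hwy : w ≠ y) (hwz : w ≠ z)
    (hxy : x ≠ y) (hxz : x ≠ z) :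
    ((univ : Finset (Fin N → Fin n → F)).filter (fun f => PP f w x y z)).card ≤
      2 ^ n * (Fintype.card F) ^ (n * (N - 2)) := by
  have hcard : Fintype.card ((Fin n → Bool) × ({t : Fin N // t ≠ y ∧ t ≠ z} → (Fin n → F))) =
      2 ^ n * (Fintype.card F) ^ (n * (N - 2)) := by
    rw [Fintype.card_prod, Fintype.card_fun, Fintype.card_fun, Fintype.card_fun,
      Fintype.card_bool, Fintype.card_fin]
    have : Fintype.card {t : Fin N // t ≠ y ∧ t ≠ z} = N - 2 := by
      rw [Fintype.card_subtype]
      have h1 : (univ.filter (fun t : Fin N => t ≠ y ∧ t ≠ z)) = (univ.erase y).erase z := by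
        ext t; simp [Finset.mem_erase]; tauto
      rw [h1, Finset.card_erase_of_mem (Finset.mem_erase.mpr ⟨hyz.symm, mem_univ _⟩),
        Finset.card_erase_of_mem (mem_univ _), Finset.card_univ, Fintype.card_fin]
      omega
    rw [this, ← pow_mul]
  rw [← hcard, ← Finset.card_univ]
  apply Finset.card_le_card_of_injOn
    (fun f => (fun c => if f y c = f w c then true else false, fun t => f t.1))
  · intro f _; exact mem_univ _
  · intro f hf g hg h
    simp only [Finset.mem_coe, Finset.mem_filter] at hf hg
    have hPf : PP f w x y z := hf.2
    have hPg : PP g w x y z := hg.2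
    have h1 : ∀ c : Fin n, (if f y c = f w c then true else false)
        = (if g y c = g w c then true else false) := fun c => congrFun (congrArg Prod.fst h) c
    have h2 : ∀ t : Fin N, t ≠ y → t ≠ z → f t = g t := by
      intro t h1 h2
      exact congrFun (congrArg Prod.snd h) ⟨t, h1, h2⟩
    have hw : f w = g w := h2 w hwy hwz
    have hx : f x = g x := h2 x hxy hxz
    have hy : f y = g y := by
      funext c
      have hfy : f y c ∈ ({f w c, f x c} : Set F) := by
        rw [hPf c]; simp
      have hgy : g y c ∈ ({g w c, g x c} : Set F) := by
        rw [hPg c]; simp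
      by_cases hb : f y c = f w c
      · have : g y c = g w c := by
          have := h1 c; rw [if_pos hb] at this
          by_contra hgb
          rw [if_neg hgb] at this; exact Bool.noConfusion this
        rw [hb, this, hw]
      · have hgb : ¬ (g y c = g w c) := by
          intro hgb
          have := h1 c; rw [if_neg hb, if_pos hgb] at this; exact Bool.noConfusion this
        have hfy' : f y c = f x c := by
          rcases hfy with h' | h'
          · exact absurd h' hb
          · exact h'
        have hgy' : g y c = g x c := by
          rcases hgy with h' | h'
          · exact absurd h' hgb
          · exact h'
        rw [hfy', hgy', hx]
    have hz : f z = g z := by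
      funext c
      apply pair_exchange (x := f y c)
      calc ({f y c, f z c} : Set F) = {f w c, f x c} := (hPf c).symm
        _ = {g w c, g x c} := by rw [hw, hx]
        _ = {g y c, g z c} := hPg c
        _ = {f y c, g z c} := by rw [hy]
    funext t
    by_cases ht1 : t = y
    · subst ht1; exact hy
    by_cases ht2 : t = z
    · subst ht2; exact hz
    exact h2 t ht1 ht2


theorem list_len4 {α : Type*} {l : List α} (h : l.length = 4) :
    ∃ a b c d, l = [a, b, c, d] := by
  rcases l with _ | ⟨a, t⟩
  · simp at h
  · simp only [List.length_cons] at h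
    obtain ⟨b, c, d, ht⟩ := List.length_eq_three.mp (show t.length = 3 by omega)
    exact ⟨a, b, c, d, by rw [ht]⟩

def Quads (N : ℕ) : Finset (Finset (Fin N) × Fin 3) := (univ.powersetCard 4) ×ˢ univ

def P (f : Fin N → Fin n → F) (p : Finset (Fin N) × Fin 3) : Prop :=
  ∃ a b c d : Fin N, p.1.sort (· ≤ ·) = [a, b, c, d] ∧
    (if p.2 = 0 then PP f a b c d else if p.2 = 1 then PP f a c b d else PP f a d b c)

noncomputable def badPairs (f : Fin N → Fin n → F) : Finset (Fin N × Fin N) :=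
  (pairsSet N).filter (fun p => f p.1 = f p.2)

noncomputable def badQuads (f : Fin N → Fin n → F) : Finset (Finset (Fin N) × Fin 3) :=
  (Quads N).filter (P f)

theorem quad_nonempty {f : Fin N → Fin n → F} {p : Finset (Fin N) × Fin 3}
    (hp : p ∈ badQuads f) : p.1.Nonempty := by
  rw [badQuads, Finset.mem_filter] at hp
  have h1 := hp.1
  rw [Quads, Finset.mem_product, Finset.mem_powersetCard] at h1
  exact Finset.card_pos.mp (by rw [h1.1.2]; norm_num)

noncomputable def Del (f : Fin N → Fin n → F) : Finset (Fin N) :=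
  (badPairs f).image Prod.snd ∪
    (badQuads f).attach.image (fun p => p.1.1.max' (quad_nonempty p.2))

theorem card_Del_le (f : Fin N → Fin n → F) :
    (Del f).card ≤ (badPairs f).card + (badQuads f).card := by
  refine (Finset.card_union_le _ _).trans (add_le_add ?_ ?_)
  · exact Finset.card_image_le
  · exact Finset.card_image_le.trans (by rw [Finset.card_attach])

theorem match_pairing_aux (f : Fin N → Fin n → F) {a b c d e1 e2 e3 : Fin N}
    (hab : a ≠ b) (hac : a ≠ c) (had : a ≠ d) (hbc : b ≠ c) (hbd : b ≠ d) (hcd : c ≠ d)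
    (hmem : ∀ t, (t = a ∨ t = b ∨ t = c ∨ t = d) ↔ (t = a ∨ t = e1 ∨ t = e2 ∨ t = e3))
    (hPP : PP f a b c d) :
    ∃ r : Fin 3, (if r = 0 then PP f a e1 e2 e3 else if r = 1 then PP f a e2 e1 e3
      else PP f a e3 e1 e2) := by
  have hb : b = e1 ∨ b = e2 ∨ b = e3 := by
    have := (hmem b).mp (by tauto)
    rcases this with h | h
    · exact absurd h.symm hab
    · exact h
  have hc : c = e1 ∨ c = e2 ∨ c = e3 := by
    have := (hmem c).mp (by tauto)
    rcases this with h | h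
    · exact absurd h.symm hac
    · exact h
  have hd : d = e1 ∨ d = e2 ∨ d = e3 := by
    have := (hmem d).mp (by tauto)
    rcases this with h | h
    · exact absurd h.symm had
    · exact h
  rcases hb with hb | hb | hb
  · -- b = e1
    have hc' : c = e2 ∨ c = e3 := by
      rcases hc with h | h | h
      · exact absurd (h.trans hb.symm) hbc.symm
      · exact Or.inl h
      · exact Or.inr h
    rcases hc' with hc' | hc'
    · have hd' : d = e3 := by
        rcases hd with h | h | h
        · exact absurd (h.trans hb.symm) hbd.symm
        · exact absurd (h.trans hc'.symm) hcd.symm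
        · exact h
      exact ⟨0, by simp only [if_pos rfl]; rw [← hb, ← hc', ← hd']; exact hPP⟩
    · have hd' : d = e2 := by
        rcases hd with h | h | h
        · exact absurd (h.trans hb.symm) hbd.symm
        · exact h
        · exact absurd (h.trans hc'.symm) hcd.symm
      exact ⟨0, by simp only [if_pos rfl]; rw [← hb, ← hc', ← hd']; exact hPP.swap2⟩
  · -- b = e2
    have hc' : c = e1 ∨ c = e3 := by
      rcases hc with h | h | h
      · exact Or.inl h
      · exact absurd (h.trans hb.symm) hbc.symm
      · exact Or.inr h
    rcases hc' with hc' | hc'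
    · have hd' : d = e3 := by
        rcases hd with h | h | h
        · exact absurd (h.trans hc'.symm) hcd.symm
        · exact absurd (h.trans hb.symm) hbd.symm
        · exact h
      refine ⟨1, ?_⟩
      rw [if_neg (by decide), if_pos rfl, ← hb, ← hc', ← hd']
      exact hPP
    · have hd' : d = e1 := by
        rcases hd with h | h | h
        · exact h
        · exact absurd (h.trans hb.symm) hbd.symm
        · exact absurd (h.trans hc'.symm) hcd.symm
      refine ⟨1, ?_⟩
      rw [if_neg (by decide), if_pos rfl, ← hb, ← hc', ← hd']
      exact hPP.swap2
  · -- b = e3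
    have hc' : c = e1 ∨ c = e2 := by
      rcases hc with h | h | h
      · exact Or.inl h
      · exact Or.inr h
      · exact absurd (h.trans hb.symm) hbc.symm
    rcases hc' with hc' | hc'
    · have hd' : d = e2 := by
        rcases hd with h | h | h
        · exact absurd (h.trans hc'.symm) hcd.symm
        · exact h
        · exact absurd (h.trans hb.symm) hbd.symm
      refine ⟨2, ?_⟩
      rw [if_neg (by decide), if_neg (by decide), ← hb, ← hc', ← hd']
      exact hPP
    · have hd' : d = e1 := by
        rcases hd with h | h | h
        · exact h
        · exact absurd (h.trans hc'.symm) hcd.symm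
        · exact absurd (h.trans hb.symm) hbd.symm
      refine ⟨2, ?_⟩
      rw [if_neg (by decide), if_neg (by decide), ← hb, ← hc', ← hd']
      exact hPP.swap2

theorem match_pairing (f : Fin N → Fin n → F) {a b c d e0 e1 e2 e3 : Fin N}
    (hab : a ≠ b) (hac : a ≠ c) (had : a ≠ d) (hbc : b ≠ c) (hbd : b ≠ d) (hcd : c ≠ d)
    (hmem : ∀ t, (t = a ∨ t = b ∨ t = c ∨ t = d) ↔ (t = e0 ∨ t = e1 ∨ t = e2 ∨ t = e3))
    (hPP : PP f a b c d) :
    ∃ r : Fin 3, (if r = 0 then PP f e0 e1 e2 e3 else if r = 1 then PP f e0 e2 e1 e3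
      else PP f e0 e3 e1 e2) := by
  have he0 : e0 = a ∨ e0 = b ∨ e0 = c ∨ e0 = d := (hmem e0).mpr (by tauto)
  rcases he0 with h0 | h0 | h0 | h0
  · subst h0
    exact match_pairing_aux f hab hac had hbc hbd hcd hmem hPP
  · subst h0
    exact match_pairing_aux f hab.symm hbc hbd hac had hcd
      (fun t => by rw [← hmem t]; tauto) hPP.swap1
  · subst h0
    exact match_pairing_aux f hcd hac.symm hbc.symm had.symm hbd.symm hab
      (fun t => by rw [← hmem t]; tauto) hPP.symm
  · subst h0
    exact match_pairing_aux f hcd.symm had.symm hbd.symm hac.symm hbc.symm hab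
      (fun t => by rw [← hmem t]; tauto) hPP.symm.swap1

theorem coverage (f : Fin N → Fin n → F) {a b c d : Fin N}
    (hab : a ≠ b) (hac : a ≠ c) (had : a ≠ d) (hbc : b ≠ c) (hbd : b ≠ d) (hcd : c ≠ d)
    (hPP : PP f a b c d) :
    ∃ m ∈ Del f, (m = a ∨ m = b ∨ m = c ∨ m = d) := by
  set s : Finset (Fin N) := {a, b, c, d} with hs
  have hmemS : ∀ t, t ∈ s ↔ (t = a ∨ t = b ∨ t = c ∨ t = d) := by
    intro t; simp [hs]
  have hcard : s.card = 4 := by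
    rw [hs]
    rw [Finset.card_insert_of_notMem (by simp [hab, hac, had]),
      Finset.card_insert_of_notMem (by simp [hbc, hbd]),
      Finset.card_insert_of_notMem (by simp [hcd]), Finset.card_singleton]
  obtain ⟨e0, e1, e2, e3, hl⟩ := list_len4 (l := s.sort (· ≤ ·))
    (by rw [Finset.length_sort, hcard])
  have hmem : ∀ t, (t = a ∨ t = b ∨ t = c ∨ t = d) ↔ (t = e0 ∨ t = e1 ∨ t = e2 ∨ t = e3) := by
    intro t
    rw [← hmemS t, ← Finset.mem_sort (α := Fin N) (· ≤ ·), hl]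
    simp
  obtain ⟨r, hr⟩ := match_pairing f hab hac had hbc hbd hcd hmem hPP
  have hP : P f (s, r) := ⟨e0, e1, e2, e3, hl, hr⟩
  have hq : (s, r) ∈ badQuads f := by
    rw [badQuads, Finset.mem_filter]
    refine ⟨?_, hP⟩
    rw [Quads, Finset.mem_product, Finset.mem_powersetCard]
    exact ⟨⟨Finset.subset_univ _, hcard⟩, Finset.mem_univ _⟩
  refine ⟨s.max' ⟨a, (hmemS a).mpr (by tauto)⟩, ?_, ?_⟩
  · apply Finset.mem_union_right
    exact Finset.mem_image.mpr ⟨⟨(s, r), hq⟩, Finset.mem_attach _ _, rfl⟩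
  · exact (hmemS _).mp (s.max'_mem _)



theorem sum_badPairs :
    ∑ f : Fin N → Fin n → F, (badPairs f).card ≤
      N.choose 2 * (Fintype.card F) ^ (n * (N - 1)) := by
  calc ∑ f : Fin N → Fin n → F, (badPairs f).card
      = ∑ f : Fin N → Fin n → F, ∑ p ∈ pairsSet N, (if f p.1 = f p.2 then 1 else 0) :=
        Finset.sum_congr rfl (fun f _ => Finset.card_filter _ _)
    _ = ∑ p ∈ pairsSet N, ∑ f : Fin N → Fin n → F, (if f p.1 = f p.2 then 1 else 0) :=
        Finset.sum_comm
    _ ≤ ∑ _p ∈ pairsSet N, (Fintype.card F) ^ (n * (N - 1)) := by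
        apply Finset.sum_le_sum
        intro p hp
        have hlt : p.1 < p.2 := by
          rw [pairsSet, Finset.mem_filter] at hp; exact hp.2
        rw [← Finset.card_filter]
        exact card_pair_bad (ne_of_lt hlt)
    _ = N.choose 2 * (Fintype.card F) ^ (n * (N - 1)) := by
        rw [Finset.sum_const, card_pairsSet, smul_eq_mul]

theorem card_P_bound {p : Finset (Fin N) × Fin 3} (hp : p ∈ Quads N) :
    ((univ : Finset (Fin N → Fin n → F)).filter (fun f => P f p)).card ≤
      2 ^ n * (Fintype.card F) ^ (n * (N - 2)) := by
  obtain ⟨s, r⟩ := p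
  have hcard : s.card = 4 := by
    rw [Quads, Finset.mem_product, Finset.mem_powersetCard] at hp
    exact hp.1.2
  obtain ⟨e0, e1, e2, e3, hl⟩ := list_len4 (l := s.sort (· ≤ ·))
    (by rw [Finset.length_sort, hcard])
  have hnd := Finset.sort_nodup s (· ≤ ·)
  rw [hl] at hnd
  simp only [List.nodup_cons, List.mem_cons, List.mem_singleton, List.not_mem_nil,
    or_false, not_or, List.nodup_nil, and_true] at hnd
  obtain ⟨⟨h01, h02, h03⟩, ⟨h12, h13⟩, h23, -⟩ := hnd
  have hiff : ∀ f : Fin N → Fin n → F, P f (s, r) ↔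
      (if r = 0 then PP f e0 e1 e2 e3 else if r = 1 then PP f e0 e2 e1 e3
        else PP f e0 e3 e1 e2) := by
    intro f
    constructor
    · rintro ⟨a, b, c, d, hl', hq⟩
      rw [hl] at hl'
      simp only [List.cons.injEq, and_true] at hl'
      obtain ⟨ha, hb, hc, hd⟩ := hl'
      subst ha; subst hb; subst hc; subst hd
      exact hq
    · intro hq
      exact ⟨e0, e1, e2, e3, hl, hq⟩
  rw [Finset.filter_congr (fun f _ => hiff f)]
  by_cases hr0 : r = 0
  · simp only [if_pos hr0]
    exact card_quad_bad h23 h02 h03 h12 h13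
  by_cases hr1 : r = 1
  · simp only [if_neg hr0, if_pos hr1]
    exact card_quad_bad h13 h01 h03 (Ne.symm h12) h23
  · simp only [if_neg hr0, if_neg hr1]
    exact card_quad_bad h12 h01 h02 (Ne.symm h13) (Ne.symm h23)

theorem card_Quads : (Quads N).card = N.choose 4 * 3 := by
  rw [Quads, Finset.card_product, Finset.card_powersetCard, Finset.card_univ,
    Finset.card_univ, Fintype.card_fin, Fintype.card_fin]

theorem sum_badQuads :
    ∑ f : Fin N → Fin n → F, (badQuads f).card ≤
      N.choose 4 * 3 * (2 ^ n * (Fintype.card F) ^ (n * (N - 2))) := by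
  calc ∑ f : Fin N → Fin n → F, (badQuads f).card
      = ∑ f : Fin N → Fin n → F, ∑ p ∈ Quads N, (if P f p then 1 else 0) :=
        Finset.sum_congr rfl (fun f _ => Finset.card_filter _ _)
    _ = ∑ p ∈ Quads N, ∑ f : Fin N → Fin n → F, (if P f p then 1 else 0) :=
        Finset.sum_comm
    _ ≤ ∑ p ∈ Quads N, 2 ^ n * (Fintype.card F) ^ (n * (N - 2)) := by
        apply Finset.sum_le_sum
        intro p hp
        rw [← Finset.card_filter]
        exact card_P_bound hp
    _ = _ := by rw [Finset.sum_const, card_Quads, smul_eq_mul]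

theorem sum_Del :
    ∑ f : Fin N → Fin n → F, (Del f).card ≤
      N.choose 2 * (Fintype.card F) ^ (n * (N - 1)) +
        N.choose 4 * 3 * (2 ^ n * (Fintype.card F) ^ (n * (N - 2))) := by
  calc ∑ f : Fin N → Fin n → F, (Del f).card
      ≤ ∑ f : Fin N → Fin n → F, ((badPairs f).card + (badQuads f).card) :=
        Finset.sum_le_sum (fun f _ => card_Del_le f)
    _ = (∑ f : Fin N → Fin n → F, (badPairs f).card) +
          ∑ f : Fin N → Fin n → F, (badQuads f).card := Finset.sum_add_distrib
    _ ≤ _ := add_le_add sum_badPairs sum_badQuads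


theorem arith_bound (hq : 1 ≤ Fintype.card F) (n N : ℕ) :
    ((N.choose 2 * (Fintype.card F) ^ (n * (N - 1)) +
        N.choose 4 * 3 * (2 ^ n * (Fintype.card F) ^ (n * (N - 2)))) : ℝ) ≤
      ((N.choose 2 : ℝ) / (Fintype.card F : ℝ) ^ n
          + 3 * (N.choose 4 : ℝ) * 2 ^ n / (Fintype.card F : ℝ) ^ (2 * n)) *
        (Fintype.card F : ℝ) ^ (n * N) := by
  set q : ℝ := (Fintype.card F : ℝ) with hqdef
  have hq0 : (0 : ℝ) < q := by
    rw [hqdef]; exact_mod_cast Nat.lt_of_lt_of_le Nat.zero_lt_one hq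
  have hqn : q ^ n ≠ 0 := pow_ne_zero _ (ne_of_gt hq0)
  have hq2n : q ^ (2 * n) ≠ 0 := pow_ne_zero _ (ne_of_gt hq0)
  match N with
  | 0 => norm_num [Nat.choose]
  | 1 => norm_num [Nat.choose]
  | (M + 2) =>
    have e1 : q ^ (n * (M + 2 - 1)) * q ^ n = q ^ (n * (M + 2)) := by
      rw [← pow_add]
      congr 1
    have e2 : q ^ (n * (M + 2 - 2)) * q ^ (2 * n) = q ^ (n * (M + 2)) := by
      rw [← pow_add]; congr 1
      show n * M + 2 * n = n * (M + 2)
      ring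
    have h1 : (((M + 2).choose 2 : ℕ) : ℝ) / q ^ n * q ^ (n * (M + 2))
        = (((M + 2).choose 2 : ℕ) : ℝ) * q ^ (n * (M + 2 - 1)) := by
      rw [div_mul_eq_mul_div, ← e1, ← mul_assoc, mul_div_cancel_right₀ _ hqn]
    have h2 : 3 * (((M + 2).choose 4 : ℕ) : ℝ) * 2 ^ n / q ^ (2 * n) * q ^ (n * (M + 2))
        = 3 * (((M + 2).choose 4 : ℕ) : ℝ) * 2 ^ n * q ^ (n * (M + 2 - 2)) := by
      rw [div_mul_eq_mul_div, ← e2, ← mul_assoc, mul_div_cancel_right₀ _ hq2n]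
    rw [add_mul, h1, h2]
    push_cast
    apply le_of_eq
    ring

theorem exists_small_Del (hq : 1 ≤ Fintype.card F) :
    ∃ f : Fin N → Fin n → F, ((Del f).card : ℝ) ≤
      (N.choose 2 : ℝ) / (Fintype.card F : ℝ) ^ n
        + 3 * (N.choose 4 : ℝ) * 2 ^ n / (Fintype.card F : ℝ) ^ (2 * n) := by
  by_contra hcon
  push_neg at hcon
  have hne : Nonempty F := Fintype.card_pos_iff.mp (by omega)
  have hΩne : (univ : Finset (Fin N → Fin n → F)).Nonempty := univ_nonempty
  set E : ℝ := (N.choose 2 : ℝ) / (Fintype.card F : ℝ) ^ n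
        + 3 * (N.choose 4 : ℝ) * 2 ^ n / (Fintype.card F : ℝ) ^ (2 * n) with hE
  have hcardΩ : (Fintype.card (Fin N → Fin n → F)) = (Fintype.card F) ^ (n * N) := by
    rw [Fintype.card_fun, Fintype.card_fun, Fintype.card_fin, Fintype.card_fin, ← pow_mul]
  have hlt : E * (Fintype.card F : ℝ) ^ (n * N) <
      ∑ f : Fin N → Fin n → F, ((Del f).card : ℝ) := by
    have : E * (Fintype.card F : ℝ) ^ (n * N) = ∑ _f : Fin N → Fin n → F, E / 1 := by
      rw [Finset.sum_const]
      rw [Finset.card_univ, hcardΩ]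
      push_cast
      ring
    rw [this]
    apply Finset.sum_lt_sum_of_nonempty hΩne
    intro f _
    simpa using hcon f
  have hle : ∑ f : Fin N → Fin n → F, ((Del f).card : ℝ) ≤
      E * (Fintype.card F : ℝ) ^ (n * N) := by
    calc ∑ f : Fin N → Fin n → F, ((Del f).card : ℝ)
        = ((∑ f : Fin N → Fin n → F, (Del f).card : ℕ) : ℝ) := by norm_cast
      _ ≤ ((N.choose 2 * (Fintype.card F) ^ (n * (N - 1)) +
            N.choose 4 * 3 * (2 ^ n * (Fintype.card F) ^ (n * (N - 2)))) : ℝ) := by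
          exact_mod_cast sum_Del
      _ ≤ E * (Fintype.card F : ℝ) ^ (n * N) := arith_bound hq n N
  exact absurd (lt_of_lt_of_le hlt hle) (lt_irrefl _)

theorem desc_singleton (a : Fin n → F) : desc ({a} : Set (Fin n → F)) = {a} := by
  ext y
  simp only [desc, Set.mem_setOf_eq, Set.mem_singleton_iff]
  constructor
  · intro h
    funext k
    obtain ⟨x, hx, hxy⟩ := h k
    rw [hxy, hx]
  · rintro rfl k
    exact ⟨y, rfl, rfl⟩

theorem mem_desc_pair {y a b : Fin n → F} :
    y ∈ desc ({a, b} : Set (Fin n → F)) ↔ ∀ k, y k = a k ∨ y k = b k := by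
  simp only [desc, Set.mem_setOf_eq]
  constructor
  · intro h k
    obtain ⟨x, hx, hxy⟩ := h k
    rcases hx with rfl | hx
    · exact Or.inl hxy
    · rw [Set.mem_singleton_iff] at hx; subst hx; exact Or.inr hxy
  · intro h k
    rcases h k with h' | h'
    · exact ⟨a, by simp, h'⟩
    · exact ⟨b, by simp, h'⟩

theorem desc_pair_subset {a b c d : Fin n → F}
    (h : desc ({a, b} : Set (Fin n → F)) = desc {c, d}) (k : Fin n) :
    ({a k, b k} : Set F) ⊆ {c k, d k} := by
  intro v hv
  have hyy : Function.update a k v ∈ desc ({a, b} : Set (Fin n → F)) := by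
    rw [mem_desc_pair]
    intro j
    by_cases hj : j = k
    · subst hj
      rw [Function.update_self]
      exact hv
    · rw [Function.update_of_ne hj]
      exact Or.inl rfl
  rw [h, mem_desc_pair] at hyy
  have := hyy k
  rw [Function.update_self] at this
  exact this

theorem desc_pair_proj {a b c d : Fin n → F}
    (h : desc ({a, b} : Set (Fin n → F)) = desc {c, d}) (k : Fin n) :
    ({a k, b k} : Set F) = {c k, d k} :=
  Set.Subset.antisymm (desc_pair_subset h k) (desc_pair_subset h.symm k)

end Sep2Aux

theorem separable2_exists {q n : ℕ} (hq : 2 ≤ q) (hn : 2 ≤ n) (N : ℕ)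
    (F : Type*) [Fintype F] (hF : Fintype.card F = q) :
    ∃ C : Finset (Fin n → F),
      (∀ X X' : Finset (Fin n → F), X ⊆ C → X' ⊆ C →
        X.Nonempty → X'.Nonempty → X.card ≤ 2 → X'.card ≤ 2 → X ≠ X' →
        desc (X : Set (Fin n → F)) ≠ desc (X' : Set (Fin n → F))) ∧
      (N : ℝ) - (⌊(N.choose 2 : ℝ) / (q : ℝ) ^ n
          + 3 * (N.choose 4 : ℝ) * 2 ^ n / (q : ℝ) ^ (2 * n)⌋ : ℤ) ≤ C.card := by
  classical
  subst hF
  obtain ⟨f, hf⟩ := Sep2Aux.exists_small_Del (F := F) (n := n) (N := N) (by omega)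
  set D := Sep2Aux.Del f with hD
  set C := (univ \ D).image f with hC
  have hinj : Set.InjOn f ↑(univ \ D : Finset (Fin N)) := by
    intro i hi j hj hij
    by_contra hne
    rcases lt_or_gt_of_ne hne with hlt | hlt
    · have hbp : (i, j) ∈ Sep2Aux.badPairs f := by
        rw [Sep2Aux.badPairs, Finset.mem_filter]
        exact ⟨by rw [Sep2Aux.pairsSet, Finset.mem_filter]; exact ⟨Finset.mem_univ _, hlt⟩, hij⟩
      have hjD : j ∈ D := Finset.mem_union_left _ (Finset.mem_image.mpr ⟨(i, j), hbp, rfl⟩)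
      exact (Finset.mem_sdiff.mp (Finset.mem_coe.mp hj)).2 hjD
    · have hbp : (j, i) ∈ Sep2Aux.badPairs f := by
        rw [Sep2Aux.badPairs, Finset.mem_filter]
        exact ⟨by rw [Sep2Aux.pairsSet, Finset.mem_filter]; exact ⟨Finset.mem_univ _, hlt⟩,
          hij.symm⟩
      have hiD : i ∈ D := Finset.mem_union_left _ (Finset.mem_image.mpr ⟨(j, i), hbp, rfl⟩)
      exact (Finset.mem_sdiff.mp (Finset.mem_coe.mp hi)).2 hiD
  refine ⟨C, ?_, ?_⟩
  · intro X X' hXC hX'C hXne hX'ne hX2 hX'2 hne hdesc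
    have hrep : ∀ Y : Finset (Fin n → F), Y.Nonempty → Y.card ≤ 2 →
        (∃ a, Y = {a}) ∨ (∃ a b, a ≠ b ∧ Y = {a, b}) := by
      intro Y hYne hY2
      have h1 := hYne.card_pos
      rcases (show Y.card = 1 ∨ Y.card = 2 by omega) with h | h
      · exact Or.inl (Finset.card_eq_one.mp h)
      · exact Or.inr (Finset.card_eq_two.mp h)
    rcases hrep X hXne hX2 with ⟨a, rfl⟩ | ⟨a, b, hab, rfl⟩ <;>
      rcases hrep X' hX'ne hX'2 with ⟨c, rfl⟩ | ⟨c, d, hcd, rfl⟩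
    · -- singleton vs singleton
      simp only [Finset.coe_singleton] at hdesc
      rw [Sep2Aux.desc_singleton, Sep2Aux.desc_singleton] at hdesc
      exact hne (by rw [Set.singleton_eq_singleton_iff.mp hdesc])
    · -- singleton vs pair
      simp only [Finset.coe_singleton, Finset.coe_insert] at hdesc
      have hc : c ∈ desc ({c, d} : Set (Fin n → F)) :=
        Sep2Aux.mem_desc_pair.mpr (fun k => Or.inl rfl)
      have hd : d ∈ desc ({c, d} : Set (Fin n → F)) :=
        Sep2Aux.mem_desc_pair.mpr (fun k => Or.inr rfl)
      rw [← hdesc, Sep2Aux.desc_singleton, Set.mem_singleton_iff] at hc hd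
      exact hcd (hc.trans hd.symm)
    · -- pair vs singleton
      simp only [Finset.coe_singleton, Finset.coe_insert] at hdesc
      have hc : a ∈ desc ({a, b} : Set (Fin n → F)) :=
        Sep2Aux.mem_desc_pair.mpr (fun k => Or.inl rfl)
      have hd : b ∈ desc ({a, b} : Set (Fin n → F)) :=
        Sep2Aux.mem_desc_pair.mpr (fun k => Or.inr rfl)
      rw [hdesc, Sep2Aux.desc_singleton, Set.mem_singleton_iff] at hc hd
      exact hab (hc.trans hd.symm)
    · -- pair vs pair
      simp only [Finset.coe_insert, Finset.coe_singleton] at hdesc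
      have hproj : ∀ k, ({a k, b k} : Set F) = {c k, d k} :=
        fun k => Sep2Aux.desc_pair_proj hdesc k
      by_cases hac : a = c
      · subst hac
        have hbd : b = d := funext (fun k => Sep2Aux.pair_exchange (hproj k))
        exact hne (by rw [hbd])
      by_cases had : a = d
      · subst had
        have hbc : b = c := funext (fun k => Sep2Aux.pair_exchange
          (by rw [hproj k, Set.pair_comm]))
        exact hne (by rw [hbc, Finset.pair_comm a c])
      by_cases hbc : b = c
      · subst hbc
        exact had (funext (fun k => Sep2Aux.pair_exchange'
          (by rw [hproj k, Set.pair_comm])))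
      by_cases hbd : b = d
      · subst hbd
        exact hac (funext (fun k => Sep2Aux.pair_exchange' (hproj k)))
      obtain ⟨ia, hiaD, hfa⟩ := Finset.mem_image.mp (hXC (by simp : a ∈ ({a, b} : Finset _)))
      obtain ⟨ib, hibD, hfb⟩ := Finset.mem_image.mp (hXC (by simp : b ∈ ({a, b} : Finset _)))
      obtain ⟨ic, hicD, hfc⟩ := Finset.mem_image.mp (hX'C (by simp : c ∈ ({c, d} : Finset _)))
      obtain ⟨id', hidD, hfd⟩ := Finset.mem_image.mp (hX'C (by simp : d ∈ ({c, d} : Finset _)))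
      have dab : ia ≠ ib := fun h => hab (by rw [← hfa, ← hfb, h])
      have dac : ia ≠ ic := fun h => hac (by rw [← hfa, ← hfc, h])
      have dad : ia ≠ id' := fun h => had (by rw [← hfa, ← hfd, h])
      have dbc : ib ≠ ic := fun h => hbc (by rw [← hfb, ← hfc, h])
      have dbd : ib ≠ id' := fun h => hbd (by rw [← hfb, ← hfd, h])
      have dcd : ic ≠ id' := fun h => hcd (by rw [← hfc, ← hfd, h])
      have hPPf : Sep2Aux.PP f ia ib ic id' := fun k => by
        rw [hfa, hfb, hfc, hfd]; exact hproj k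
      obtain ⟨m, hmD, hm⟩ := Sep2Aux.coverage f dab dac dad dbc dbd dcd hPPf
      rcases hm with h | h | h | h
      · subst h; exact (Finset.mem_sdiff.mp hiaD).2 hmD
      · subst h; exact (Finset.mem_sdiff.mp hibD).2 hmD
      · subst h; exact (Finset.mem_sdiff.mp hicD).2 hmD
      · subst h; exact (Finset.mem_sdiff.mp hidD).2 hmD
  · have hDN : D.card ≤ N := le_trans (Finset.card_le_univ D)
      (by rw [Fintype.card_fin])
    have hcardC : C.card = N - D.card := by
      rw [hC, Finset.card_image_of_injOn hinj, Finset.card_sdiff_of_subset (Finset.subset_univ _),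
        Finset.card_univ, Fintype.card_fin]
    have hfloor : (D.card : ℤ) ≤
        ⌊(N.choose 2 : ℝ) / (Fintype.card F : ℝ) ^ n
          + 3 * (N.choose 4 : ℝ) * 2 ^ n / (Fintype.card F : ℝ) ^ (2 * n)⌋ :=
      Int.le_floor.mpr (by push_cast; exact hf)
    have hcast : (C.card : ℝ) = (N : ℝ) - D.card := by
      rw [hcardC, Nat.cast_sub hDN]
    rw [hcast]
    have h2 : ((D.card : ℤ) : ℝ) ≤ _ := Int.cast_le.mpr hfloor
    push_cast at h2
    linarith
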